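/- Let d ≥ 1 be an integer and let f : [1,∞) → (0,∞) be increasing, (d+1)-times differentiable, satisfying the doubling condition f(2x) ≤ D·f(x) and |f^{(m)}(t)| ≤ C₀·f'(t)/t^{m−1} for all t ≥ 1 and 1 ≤ m ≤ d+1; extend f to [0,∞) by f(t) = f(1) for 0 ≤ t ≤ 1. Then there exists a constant C, depending only on d, D and C₀, such that for all integers n ≥ 1: ∑_{j=0}^{n} |Δ^{d+1}_j (A_{n−j}^d f(j))| · A_j^d ≤ C · f(n) · A_n^d, where the difference operator Δ^{d+1} acts in j on the sequence b_j = A_{n−j}^d f(j). -/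

import Mathlib

/-- `Acoef k m = A_k^m = C(k+m, k)` for `k ≥ 0`, and `0` for `k < 0`. -/
def Acoef (k : ℤ) (m : ℕ) : ℝ :=
  if 0 ≤ k then (Nat.choose (k.toNat + m) k.toNat : ℝ) else 0

open Finset Set Real

lemma Acoef_eq (n y d : ℕ) (h : y ≤ n) :
    Acoef ((n : ℤ) - (y : ℤ)) d = ((n - y + d).choose d : ℝ) := by
  rw [Acoef, if_pos (by omega : (0:ℤ) ≤ (n:ℤ) - (y:ℤ))]
  have h1 : ((n:ℤ) - (y:ℤ)).toNat = n - y := by omega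
  rw [h1]
  exact_mod_cast congrArg Nat.cast (Nat.choose_symm_add (a := n - y) (b := d))

lemma Acoef_nonneg (k : ℤ) (d : ℕ) : 0 ≤ Acoef k d := by
  rw [Acoef]; split <;> positivity

lemma Acoef_mono (d : ℕ) {k k' : ℤ} (h : k ≤ k') : Acoef k d ≤ Acoef k' d := by
  by_cases hk : 0 ≤ k
  · have hk' : 0 ≤ k' := le_trans hk h
    rw [Acoef, Acoef, if_pos hk, if_pos hk']
    have e1 : (k.toNat + d).choose k.toNat = (k.toNat + d).choose d := Nat.choose_symm_add
    have e2 : (k'.toNat + d).choose k'.toNat = (k'.toNat + d).choose d := Nat.choose_symm_add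
    rw [e1, e2]
    have : k.toNat + d ≤ k'.toNat + d := by omega
    exact_mod_cast Nat.choose_le_choose d this
  · rw [Acoef, if_neg hk]
    exact Acoef_nonneg k' d

lemma chooseprod (d n j k : ℕ) (hk : k ≤ d) (hj : 1 ≤ j) (hjk : j + k ≤ n) :
    ((n - (j + k) + d).choose (d - k) : ℝ) * ((j + d).choose d : ℝ)
      ≤ ((d : ℝ) + 1) ^ (2 * d) * (d.factorial : ℝ) * (j : ℝ) ^ (d - k)
        * ((n + d).choose d : ℝ) := by
  have hc1 : ((n - (j + k) + d).choose (d - k) : ℝ) ≤ ((n : ℝ) + d) ^ (d - k) := by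
    have hnat : (n - (j + k) + d).choose (d - k) ≤ (n + d) ^ (d - k) :=
      le_trans (Nat.choose_le_pow _ _) (Nat.pow_le_pow_left (by omega) _)
    calc ((n - (j + k) + d).choose (d - k) : ℝ) ≤ (((n + d) ^ (d - k) : ℕ) : ℝ) := by
          exact_mod_cast hnat
      _ = ((n : ℝ) + d) ^ (d - k) := by push_cast; ring
  have hc2 : ((j + d).choose d : ℝ) ≤ (((d : ℝ) + 1) * j) ^ d := by
    have h1 : j + d ≤ (d + 1) * j := by nlinarith
    have hnat : (j + d).choose d ≤ ((d + 1) * j) ^ d :=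
      le_trans (Nat.choose_le_pow _ _) (Nat.pow_le_pow_left h1 _)
    calc ((j + d).choose d : ℝ) ≤ ((((d + 1) * j) ^ d : ℕ) : ℝ) := by exact_mod_cast hnat
      _ = (((d : ℝ) + 1) * j) ^ d := by push_cast; ring
  have hc3 : ((n : ℝ) + 1) ^ d ≤ (d.factorial : ℝ) * ((n + d).choose d : ℝ) := by
    have := Nat.pow_le_choose (α := ℝ) d (n + d)
    have harg : n + d + 1 - d = n + 1 := by omega
    rw [harg] at this
    rw [div_le_iff₀ (by positivity : (0:ℝ) < (d.factorial : ℝ))] at this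
    calc ((n : ℝ) + 1) ^ d = (((n + 1 : ℕ)) : ℝ) ^ d := by push_cast; ring
      _ ≤ ((n + d).choose d : ℝ) * (d.factorial : ℝ) := this
      _ = (d.factorial : ℝ) * ((n + d).choose d : ℝ) := by ring
  have hjnd : (j : ℝ) ≤ (n : ℝ) + d := by
    have : (j : ℝ) ≤ (n : ℝ) := by exact_mod_cast (by omega : j ≤ n)
    linarith [(by positivity : (0:ℝ) ≤ (d:ℝ))]
  have hdk : d - k + k = d := by omega
  calc ((n - (j + k) + d).choose (d - k) : ℝ) * ((j + d).choose d : ℝ)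
      ≤ ((n : ℝ) + d) ^ (d - k) * (((d : ℝ) + 1) * j) ^ d := by
        apply mul_le_mul hc1 hc2 (by positivity) (by positivity)
    _ = ((d : ℝ) + 1) ^ d * ((n : ℝ) + d) ^ (d - k) * ((j : ℝ) ^ (d - k) * (j : ℝ) ^ k) := by
        rw [mul_pow, ← pow_add, hdk]; ring
    _ ≤ ((d : ℝ) + 1) ^ d * ((n : ℝ) + d) ^ (d - k) * ((j : ℝ) ^ (d - k) * ((n : ℝ) + d) ^ k) := by
        gcongr
    _ = ((d : ℝ) + 1) ^ d * ((n : ℝ) + d) ^ d * (j : ℝ) ^ (d - k) := by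
        have hp : ((n:ℝ)+d)^(d-k) * ((n:ℝ)+d)^k = ((n:ℝ)+d)^d := by rw [← pow_add, hdk]
        calc ((d : ℝ) + 1) ^ d * ((n : ℝ) + d) ^ (d - k) * ((j : ℝ) ^ (d - k) * ((n : ℝ) + d) ^ k)
            = ((d : ℝ) + 1) ^ d * (((n:ℝ)+d)^(d-k) * ((n:ℝ)+d)^k) * (j : ℝ) ^ (d - k) := by ring
          _ = ((d : ℝ) + 1) ^ d * ((n : ℝ) + d) ^ d * (j : ℝ) ^ (d - k) := by rw [hp]
    _ ≤ ((d : ℝ) + 1) ^ d * (((d : ℝ) + 1) * ((n : ℝ) + 1)) ^ d * (j : ℝ) ^ (d - k) := by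
        gcongr
        nlinarith [(by positivity : (0:ℝ) ≤ (n:ℝ)), (by positivity : (0:ℝ) ≤ (d:ℝ))]
    _ = ((d : ℝ) + 1) ^ (2 * d) * ((n : ℝ) + 1) ^ d * (j : ℝ) ^ (d - k) := by
        rw [mul_pow, two_mul, pow_add]; ring
    _ ≤ ((d : ℝ) + 1) ^ (2 * d) * ((d.factorial : ℝ) * ((n + d).choose d : ℝ)) * (j : ℝ) ^ (d - k) := by
        gcongr
    _ = ((d : ℝ) + 1) ^ (2 * d) * (d.factorial : ℝ) * (j : ℝ) ^ (d - k) * ((n + d).choose d : ℝ) := by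
        ring

def Dop (m : ℕ) (u : ℕ → ℝ) (x : ℕ) : ℝ :=
  ∑ i ∈ Finset.range (m + 1), (-1 : ℝ) ^ i * (Nat.choose m i : ℝ) * u (x + i)

lemma Dop_zero (u : ℕ → ℝ) (x : ℕ) : Dop 0 u x = u x := by
  simp [Dop]

lemma Dop_succ (m : ℕ) (u : ℕ → ℝ) (x : ℕ) :
    Dop (m + 1) u x = Dop m u x - Dop m u (x + 1) := by
  have h1 : Dop (m + 1) u x
      = u x + ∑ i ∈ range (m + 1),
          (-1 : ℝ) ^ (i+1) * ((Nat.choose m i : ℝ) + (Nat.choose m (i+1) : ℝ)) * u (x + (i+1)) := by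
    rw [Dop, Finset.sum_range_succ' _ (m+1)]
    simp only [Nat.choose_succ_succ, pow_zero, Nat.choose_zero_right, Nat.cast_one, one_mul,
      Nat.cast_add, add_zero, Nat.succ_eq_add_one]
    ring_nf
    rw [add_comm]
    congr 1; apply Finset.sum_congr rfl; intro i _; rw [show 1 + i + x = 1 + x + i by omega]
  have h2 : ∑ i ∈ range (m + 1), (-1 : ℝ) ^ (i+1) * (Nat.choose m (i+1) : ℝ) * u (x + (i+1))
      = Dop m u x - u x := by
    rw [Finset.sum_range_succ, Dop, Finset.sum_range_succ' _ m]
    simp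
  have h3 : ∑ i ∈ range (m + 1), (-1 : ℝ) ^ (i+1) * (Nat.choose m i : ℝ) * u (x + (i+1))
      = - Dop m u (x + 1) := by
    rw [Dop, ← Finset.sum_neg_distrib]
    apply Finset.sum_congr rfl
    intro i _
    have : x + 1 + i = x + (i + 1) := by ring
    rw [this]
    ring
  calc Dop (m+1) u x
      = u x + (∑ i ∈ range (m + 1), (-1:ℝ)^(i+1) * (Nat.choose m i : ℝ) * u (x+(i+1))
        + ∑ i ∈ range (m + 1), (-1:ℝ)^(i+1) * (Nat.choose m (i+1) : ℝ) * u (x+(i+1))) := by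
        rw [h1, ← Finset.sum_add_distrib]; congr 1; apply Finset.sum_congr rfl; intro i _; ring
    _ = Dop m u x - Dop m u (x + 1) := by rw [h2, h3]; ring

lemma Dop_congr (m : ℕ) (u v : ℕ → ℝ) (x : ℕ) (h : ∀ y, x ≤ y → y ≤ x + m → u y = v y) :
    Dop m u x = Dop m v x := by
  unfold Dop
  apply Finset.sum_congr rfl
  intro i hi
  rw [h (x + i) (by omega) (by have := Finset.mem_range.mp hi; omega)]

lemma Dop_sub (m : ℕ) (u v : ℕ → ℝ) (x : ℕ) :
    Dop m (fun y => u y - v y) x = Dop m u x - Dop m v x := by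
  unfold Dop
  rw [← Finset.sum_sub_distrib]
  apply Finset.sum_congr rfl
  intro i _
  ring

lemma Dop_shift (m : ℕ) (u : ℕ → ℝ) (x : ℕ) :
    Dop m (fun y => u (y + 1)) x = Dop m u (x + 1) := by
  unfold Dop
  apply Finset.sum_congr rfl
  intro i _
  have : x + 1 + i = x + i + 1 := by ring
  rw [this]

/-- Finite-difference bound via iterated mean value theorem. -/
lemma fd_bound : ∀ (r : ℕ) (F : ℕ → ℝ → ℝ),
    (∀ m, m < r → ∀ t : ℝ, 1 ≤ t → HasDerivAt (F m) (F (m + 1) t) t) →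
    ∀ (x : ℕ), 1 ≤ x → ∀ M : ℝ,
    (∀ t : ℝ, (x : ℝ) ≤ t → t ≤ (x : ℝ) + r → |F r t| ≤ M) →
    |Dop r (fun y => F 0 (y : ℝ)) x| ≤ M := by
  intro r
  induction r with
  | zero =>
    intro F _ x hx M hM
    rw [Dop_zero]
    exact hM x le_rfl (by simp)
  | succ r ih =>
    intro F hF x hx M hM
    set G : ℕ → ℝ → ℝ := fun m t => F m t - F m (t + 1) with hGdef
    have hG : ∀ m, m < r → ∀ t : ℝ, 1 ≤ t → HasDerivAt (G m) (G (m + 1) t) t := by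
      intro m hm t ht
      have h1 := hF m (by omega) t ht
      have h2 := (hF m (by omega) (t + 1) (by linarith)).comp_add_const t 1
      exact h1.sub h2
    have hGM : ∀ t : ℝ, (x : ℝ) ≤ t → t ≤ (x : ℝ) + r → |G r t| ≤ M := by
      intro t ht1 ht2
      have hx1 : (1 : ℝ) ≤ t := le_trans (by exact_mod_cast hx) ht1
      have hcont : ContinuousOn (F r) (Icc t (t + 1)) := by
        intro s hs
        exact ((hF r (by omega) s (le_trans hx1 hs.1)).continuousAt).continuousWithinAt
      have hderiv : ∀ s ∈ Ioo t (t + 1), HasDerivAt (F r) (F (r + 1) s) s :=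
        fun s hs => hF r (by omega) s (le_trans hx1 hs.1.le)
      obtain ⟨c, hc, hceq⟩ := exists_hasDerivAt_eq_slope (F r) (F (r + 1))
        (by linarith : t < t + 1) hcont hderiv
      have : G r t = -(F (r + 1) c) := by
        rw [hGdef]
        simp only []
        rw [hceq]
        field_simp
        ring
      rw [this, abs_neg]
      exact hM c (le_trans ht1 hc.1.le) (by push_cast; linarith [hc.2])
    have hrec : Dop r (fun y => G 0 (y : ℝ)) x = Dop (r + 1) (fun y => F 0 (y : ℝ)) x := by
      have e1 : Dop r (fun y => G 0 (y : ℝ)) x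
          = Dop r (fun y => F 0 (y : ℝ)) x - Dop r (fun y => F 0 ((y : ℝ) + 1)) x := by
        rw [← Dop_sub]
      have e2 : Dop r (fun y => F 0 ((y : ℝ) + 1)) x = Dop r (fun y => F 0 (y : ℝ)) (x + 1) := by
        rw [← Dop_shift]
        apply Dop_congr
        intro y _ _
        push_cast
        ring_nf
      rw [e1, e2, Dop_succ]
    rw [← hrec]
    exact ih G hG x hx M hGM

lemma Dop_leibniz (m : ℕ) (u v : ℕ → ℝ) (x : ℕ) :
    Dop m (fun y => u y * v y) x
      = ∑ k ∈ range (m + 1), (Nat.choose m k : ℝ) * Dop k u x * Dop (m - k) v (x + k) := by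
  induction m generalizing x with
  | zero => simp [Dop_zero]
  | succ m ih =>
    rw [Dop_succ, ih x, ih (x+1), ← Finset.sum_sub_distrib]
    have key : ∀ k ∈ range (m + 1),
        (Nat.choose m k : ℝ) * Dop k u x * Dop (m - k) v (x + k)
          - (Nat.choose m k : ℝ) * Dop k u (x+1) * Dop (m - k) v (x + 1 + k)
        = (Nat.choose m k : ℝ) * Dop k u x * Dop (m - k + 1) v (x + k)
          + (Nat.choose m k : ℝ) * Dop (k+1) u x * Dop (m - k) v (x + (k+1)) := by
      intro k hk
      rw [Dop_succ (m-k), Dop_succ k]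
      have e1 : x + k + 1 = x + 1 + k := by ring
      have e2 : x + (k+1) = x + 1 + k := by ring
      rw [e1, e2]
      ring
    rw [Finset.sum_congr rfl key, Finset.sum_add_distrib]
    have hS1 : ∑ k ∈ range (m+1), (Nat.choose m k : ℝ) * Dop k u x * Dop (m-k+1) v (x+k)
        = (∑ k ∈ range m, (Nat.choose m (k+1) : ℝ) * Dop (k+1) u x * Dop (m-k) v (x+(k+1)))
          + u x * Dop (m+1) v x := by
      rw [Finset.sum_range_succ' _ m]
      congr 1
      · apply Finset.sum_congr rfl
        intro k hk
        have : m - (k+1) + 1 = m - k := by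
          have := Finset.mem_range.mp hk; omega
        rw [this]
      · simp [Dop_zero]
    have hS2 : ∑ k ∈ range (m+1), (Nat.choose m k : ℝ) * Dop (k+1) u x * Dop (m-k) v (x+(k+1))
        = ∑ k ∈ range (m+1), (Nat.choose m k : ℝ) * Dop (k+1) u x * Dop (m-k) v (x+(k+1)) := rfl
    rw [hS1]
    have hT : ∑ k ∈ range (m+1+1), (Nat.choose (m+1) k : ℝ) * Dop k u x * Dop (m+1-k) v (x+k)
        = (∑ k ∈ range (m+1), ((Nat.choose m k : ℝ) + (Nat.choose m (k+1) : ℝ))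
            * Dop (k+1) u x * Dop (m-k) v (x+(k+1))) + u x * Dop (m+1) v x := by
      rw [Finset.sum_range_succ' _ (m+1)]
      congr 1
      · apply Finset.sum_congr rfl
        intro k hk
        have h1 : m + 1 - (k+1) = m - k := by omega
        rw [h1, Nat.choose_succ_succ]
        push_cast
        ring
      · simp [Dop_zero]
    rw [hT]
    have hsplit : ∑ k ∈ range (m+1), ((Nat.choose m k : ℝ) + (Nat.choose m (k+1) : ℝ))
            * Dop (k+1) u x * Dop (m-k) v (x+(k+1))
        = (∑ k ∈ range (m+1), (Nat.choose m k : ℝ) * Dop (k+1) u x * Dop (m-k) v (x+(k+1)))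
          + ∑ k ∈ range m, (Nat.choose m (k+1) : ℝ) * Dop (k+1) u x * Dop (m-k) v (x+(k+1)) := by
      have expand : ∀ k ∈ range (m+1), ((Nat.choose m k : ℝ) + (Nat.choose m (k+1) : ℝ))
            * Dop (k+1) u x * Dop (m-k) v (x+(k+1))
          = (Nat.choose m k : ℝ) * Dop (k+1) u x * Dop (m-k) v (x+(k+1))
            + (Nat.choose m (k+1) : ℝ) * Dop (k+1) u x * Dop (m-k) v (x+(k+1)) := by
        intro k hk; ring
      rw [Finset.sum_congr rfl expand, Finset.sum_add_distrib]
      congr 1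
      rw [Finset.sum_range_succ]
      simp [Nat.choose_succ_self]
    rw [hsplit]
    ring

lemma Dop_choose (n d : ℕ) : ∀ k, k ≤ d → ∀ j, j + k ≤ n →
    Dop k (fun y => (Nat.choose (n - y + d) d : ℝ)) j
      = (Nat.choose (n - (j + k) + d) (d - k) : ℝ) := by
  intro k
  induction k with
  | zero => intro _ j _; simp [Dop_zero]
  | succ k ih =>
    intro hk j hj
    rw [Dop_succ, ih (by omega) j (by omega), ih (by omega) (j+1) (by omega)]
    have hm : n - (j + k) = (n - (j + (k+1))) + 1 := by omega
    set m := n - (j + (k+1)) with hmdef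
    have h1 : j + 1 + k = j + (k + 1) := by omega
    have key : (m + 1 + d).choose (d - k) = (m + d).choose (d - (k+1)) + (m + d).choose (d - k) := by
      have h2 : d - k = (d - (k+1)) + 1 := by omega
      have harg : m + 1 + d = (m + d) + 1 := by omega
      rw [harg, h2, Nat.choose_succ_succ]
    rw [h1, hm, key]
    push_cast
    ring

lemma Dop_choose_top (n d : ℕ) (j : ℕ) (hj : j + (d + 1) ≤ n) :
    Dop (d + 1) (fun y => (Nat.choose (n - y + d) d : ℝ)) j = 0 := by
  rw [Dop_succ, Dop_choose n d d le_rfl j (by omega), Dop_choose n d d le_rfl (j+1) (by omega)]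
  simp

lemma deriv_nonneg_of_mono (f : ℝ → ℝ) (t : ℝ) (ht : 1 ≤ t)
    (hdiff : DifferentiableAt ℝ f t)
    (mono : ∀ x y : ℝ, 1 ≤ x → x ≤ y → f x ≤ f y) : 0 ≤ deriv f t := by
  have h : HasDerivWithinAt f (deriv f t) (Ioi t) t :=
    hdiff.hasDerivAt.hasDerivWithinAt
  have htend := hasDerivWithinAt_iff_tendsto_slope.mp h
  have hIoi : Ioi t \ {t} = Ioi t := by
    ext u; simp only [Set.mem_diff, Set.mem_Ioi, mem_singleton_iff]
    constructor
    · exact fun h => h.1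
    · intro h; exact ⟨h, by intro hc; simp [hc] at h⟩
  rw [hIoi] at htend
  refine ge_of_tendsto htend ?_
  filter_upwards [self_mem_nhdsWithin] with u hu
  have hu' : t < u := hu
  rw [slope_def_field]
  have : f t ≤ f u := mono t u ht hu'.le
  apply div_nonneg (by linarith) (by linarith)

lemma gronwall_up (φ φ' : ℝ → ℝ) (C : ℝ)
    (hderiv : ∀ t : ℝ, 1 ≤ t → HasDerivAt φ (φ' t) t)
    (hpos : ∀ t : ℝ, 1 ≤ t → 0 ≤ φ t)
    (hbound : ∀ t : ℝ, 1 ≤ t → |φ' t| ≤ C * φ t)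
    (a b : ℝ) (ha : 1 ≤ a) (hab : a ≤ b) :
    φ b ≤ φ a * Real.exp (C * (b - a)) := by
  have key := norm_le_gronwallBound_of_norm_deriv_right_le (f := φ) (f' := φ')
    (δ := ‖φ a‖) (K := C) (ε := 0) (a := a) (b := b)
    (fun s hs => ((hderiv s (le_trans ha hs.1)).continuousAt).continuousWithinAt)
    (fun s hs => (hderiv s (le_trans ha hs.1)).hasDerivWithinAt)
    le_rfl
    (fun s hs => by
      rw [Real.norm_eq_abs, Real.norm_eq_abs,
        abs_of_nonneg (hpos s (le_trans ha hs.1))]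
      simpa using hbound s (le_trans ha hs.1))
  have := key b ⟨hab, le_rfl⟩
  rw [gronwallBound_ε0, Real.norm_eq_abs, Real.norm_eq_abs,
    abs_of_nonneg (hpos b (le_trans ha hab)), abs_of_nonneg (hpos a ha)] at this
  exact this

lemma gronwall_down (φ φ' : ℝ → ℝ) (C : ℝ)
    (hderiv : ∀ t : ℝ, 1 ≤ t → HasDerivAt φ (φ' t) t)
    (hpos : ∀ t : ℝ, 1 ≤ t → 0 ≤ φ t)
    (hbound : ∀ t : ℝ, 1 ≤ t → |φ' t| ≤ C * φ t)
    (a b : ℝ) (ha : 1 ≤ a) (hab : a ≤ b) :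
    φ a ≤ φ b * Real.exp (C * (b - a)) := by
  set g : ℝ → ℝ := fun u => φ (a + b - u) with hg
  have hinner : ∀ u : ℝ, HasDerivAt (fun u : ℝ => a + b - u) (-1) u := by
    intro u
    simpa using (hasDerivAt_id u).const_sub (a + b)
  have harg : ∀ u : ℝ, a ≤ u → u ≤ b → 1 ≤ a + b - u := fun u h1 h2 => by linarith
  have hgderiv : ∀ u ∈ Set.Ico a b, HasDerivAt g (-(φ' (a + b - u))) u := by
    intro u hu
    have := (hderiv (a + b - u) (harg u hu.1 hu.2.le)).comp u (hinner u)
    rw [mul_neg_one] at this; exact this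
  have key := norm_le_gronwallBound_of_norm_deriv_right_le
    (f := g) (f' := fun u => -(φ' (a + b - u)))
    (δ := ‖g a‖) (K := C) (ε := 0) (a := a) (b := b)
    (fun s hs => by
      have := (hderiv (a + b - s) (harg s hs.1 hs.2)).continuousAt
      exact (this.comp (by continuity : Continuous (fun u : ℝ => a + b - u)).continuousAt).continuousWithinAt)
    (fun s hs => (hgderiv s hs).hasDerivWithinAt)
    le_rfl
    (fun s hs => by
      have h1 : 1 ≤ a + b - s := harg s hs.1 hs.2.le
      rw [Real.norm_eq_abs, Real.norm_eq_abs, abs_neg, hg]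
      simp only []
      rw [abs_of_nonneg (hpos _ h1)]
      simpa using hbound _ h1)
  have := key b ⟨hab, le_rfl⟩
  rw [gronwallBound_ε0, Real.norm_eq_abs, Real.norm_eq_abs] at this
  have e1 : a + b - b = a := by ring
  have e2 : a + b - a = b := by ring
  rw [hg] at this
  simp only [e1, e2] at this
  rwa [abs_of_nonneg (hpos a ha), abs_of_nonneg (hpos b (le_trans ha hab))] at this

def Fseq (f : ℝ → ℝ) : ℕ → ℝ := fun j => f (max (j : ℝ) 1)

noncomputable def useq (n d : ℕ) : ℕ → ℝ := fun y => Acoef ((n : ℤ) - (y : ℤ)) d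

noncomputable def wseq (f : ℝ → ℝ) (n d : ℕ) : ℕ → ℝ := fun y => useq n d y * Fseq f y

lemma Fseq_mono (f : ℝ → ℝ) (hfmono : ∀ x y : ℝ, 1 ≤ x → x ≤ y → f x ≤ f y)
    {a b : ℕ} (hab : a ≤ b) : Fseq f a ≤ Fseq f b := by
  apply hfmono _ _ (le_max_right _ _)
  apply max_le_max _ le_rfl
  exact_mod_cast hab

lemma Fseq_eq (f : ℝ → ℝ) {j : ℕ} (hj : 1 ≤ j) : Fseq f j = f (j : ℝ) := by
  rw [Fseq, max_eq_left (by exact_mod_cast hj)]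

lemma bad_bound (f : ℝ → ℝ) (n d j : ℕ)
    (hfpos : ∀ t : ℝ, 1 ≤ t → 0 ≤ f t) (hj : j ≤ n)
    (hfmono : ∀ x y : ℝ, 1 ≤ x → x ≤ y → f x ≤ f y) :
    |Dop (d + 1) (wseq f n d) j|
      ≤ 2 ^ (d + 1) * (useq n d j * Fseq f (n + d + 1)) := by
  have hFnn : ∀ y : ℕ, 0 ≤ Fseq f y := by
    intro y; exact hfpos _ (le_max_right _ _)
  calc |Dop (d + 1) (wseq f n d) j|
      ≤ ∑ i ∈ range (d + 2), |(-1:ℝ)^i * ((d+1).choose i : ℝ) * wseq f n d (j + i)| :=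
        Finset.abs_sum_le_sum_abs _ _
    _ ≤ ∑ i ∈ range (d + 2), ((d+1).choose i : ℝ) * (useq n d j * Fseq f (n + d + 1)) := by
        apply Finset.sum_le_sum
        intro i hi
        have hi' : i ≤ d + 1 := by have := Finset.mem_range.mp hi; omega
        have hwnn : 0 ≤ wseq f n d (j + i) :=
          mul_nonneg (Acoef_nonneg _ _) (hFnn _)
        rw [abs_mul, abs_mul, abs_pow, abs_neg, abs_one, one_pow, one_mul,
          abs_of_nonneg (by positivity : (0:ℝ) ≤ (((d+1).choose i : ℕ) : ℝ)),
          abs_of_nonneg hwnn]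
        apply mul_le_mul_of_nonneg_left _ (by positivity)
        apply mul_le_mul (Acoef_mono d (by omega)) (Fseq_mono f hfmono (by omega))
          (hFnn _) (Acoef_nonneg _ _)
    _ = (∑ i ∈ range (d + 2), ((d+1).choose i : ℝ)) * (useq n d j * Fseq f (n + d + 1)) := by
        rw [← Finset.sum_mul]
    _ = 2 ^ (d + 1) * (useq n d j * Fseq f (n + d + 1)) := by
        congr 1
        have := Nat.sum_range_choose (d + 1)
        calc (∑ i ∈ range (d + 2), ((d+1).choose i : ℝ))
            = ((∑ i ∈ range (d + 2), (d+1).choose i : ℕ) : ℝ) := by push_cast; ring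
          _ = ((2 ^ (d+1) : ℕ) : ℝ) := by exact_mod_cast congrArg Nat.cast this
          _ = 2 ^ (d + 1) := by push_cast; ring

lemma good_bound (f : ℝ → ℝ) (d n j : ℕ) (C₀' : ℝ) (hC₀' : 0 ≤ C₀')
    (hdnn : ∀ t : ℝ, 1 ≤ t → 0 ≤ deriv f t)
    (hFam : ∀ m : ℕ, m ≤ d → ∀ t : ℝ, 1 ≤ t →
      HasDerivAt (iteratedDeriv m f) (iteratedDeriv (m + 1) f t) t)
    (hder' : ∀ m : ℕ, 1 ≤ m → m ≤ d + 1 → ∀ t : ℝ, 1 ≤ t →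
      |iteratedDeriv m f t| ≤ C₀' * deriv f t / t ^ (m - 1))
    (gup : ∀ a b : ℝ, 1 ≤ a → a ≤ b → deriv f b ≤ deriv f a * Real.exp (C₀' * (b - a)))
    (hj1 : 1 ≤ j) (hjn : j + d + 2 ≤ n) :
    |Dop (d + 1) (wseq f n d) j| * ((j + d).choose j : ℝ)
      ≤ 2 ^ (d + 1) * ((d : ℝ) + 1) ^ (2 * d) * (d.factorial : ℝ) * C₀'
          * Real.exp (C₀' * (d + 2)) * deriv f j * ((n + d).choose d : ℝ) := by
  have hj1R : (1 : ℝ) ≤ (j : ℝ) := by exact_mod_cast hj1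
  have hjpos : (0 : ℝ) < (j : ℝ) := by linarith
  set E : ℝ := Real.exp (C₀' * (d + 2)) with hEdef
  have hE0 : 0 < E := Real.exp_pos _
  set A' : ℝ := ((n + d).choose d : ℝ) with hA'def
  have hA'nn : 0 ≤ A' := by positivity
  have hAj : ((j + d).choose j : ℝ) = ((j + d).choose d : ℝ) := by
    exact_mod_cast congrArg Nat.cast (Nat.choose_symm_add (a := j) (b := d))
  -- the F-difference bounds
  have hFd : ∀ k : ℕ, k ≤ d →
      |Dop (d + 1 - k) (Fseq f) (j + k)|
        ≤ C₀' * E * deriv f j / (j : ℝ) ^ (d - k) := by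
    intro k hk
    have hcongr : Dop (d + 1 - k) (Fseq f) (j + k)
        = Dop (d + 1 - k) (fun y => iteratedDeriv 0 f (y : ℝ)) (j + k) := by
      apply Dop_congr
      intro y hy1 hy2
      rw [iteratedDeriv_zero]
      exact Fseq_eq f (by omega)
    rw [hcongr]
    apply fd_bound (d + 1 - k) (fun m => iteratedDeriv m f)
      (fun m hm t ht => hFam m (by omega) t ht) (j + k) (by omega)
    intro t ht1 ht2
    have hjt : (j : ℝ) ≤ t := le_trans (by push_cast; linarith) ht1
    have ht1' : (1 : ℝ) ≤ t := le_trans hj1R hjt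
    have h1 := hder' (d + 1 - k) (by omega) (by omega) t ht1'
    rw [show d + 1 - k - 1 = d - k by omega] at h1
    refine le_trans h1 ?_
    have hft : deriv f t ≤ deriv f j * E := by
      refine le_trans (gup j t hj1R hjt) ?_
      apply mul_le_mul_of_nonneg_left _ (hdnn j hj1R)
      rw [hEdef]
      apply Real.exp_le_exp.mpr
      have hub : t ≤ (j : ℝ) + (d + 2) := by
        push_cast at ht2 ⊢
        have : ((d : ℝ) + 1 - k) ≤ d + 1 := by
          have : (0:ℝ) ≤ (k:ℝ) := by positivity
          linarith
        -- t ≤ (j+k) + (d+1-k) = j + d + 1 ≤ j + d + 2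
        have hcast : ((d + 1 - k : ℕ) : ℝ) = (d : ℝ) + 1 - (k : ℝ) := by
          have : k ≤ d + 1 := by omega
          push_cast [Nat.cast_sub this]
          ring
        rw [hcast] at ht2
        linarith
      nlinarith [hC₀']
    calc C₀' * deriv f t / t ^ (d - k)
        ≤ C₀' * (deriv f j * E) / (j : ℝ) ^ (d - k) := by
          have hdj := hdnn j hj1R
          apply div_le_div₀ (by positivity)
            (mul_le_mul_of_nonneg_left hft hC₀') (by positivity)
            (pow_le_pow_left₀ (by linarith) hjt _)
      _ = C₀' * E * deriv f j / (j : ℝ) ^ (d - k) := by ring_nf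
  -- Leibniz decomposition
  have hw : Dop (d + 1) (wseq f n d) j
      = ∑ k ∈ range (d + 2), ((d + 1).choose k : ℝ) * Dop k (useq n d) j
          * Dop (d + 1 - k) (Fseq f) (j + k) := by
    have := Dop_leibniz (d + 1) (useq n d) (Fseq f) j
    exact this
  -- termwise bounds
  have hterm : ∀ k ∈ range (d + 2),
      |((d + 1).choose k : ℝ) * Dop k (useq n d) j * Dop (d + 1 - k) (Fseq f) (j + k)|
          * ((j + d).choose d : ℝ)
        ≤ ((d + 1).choose k : ℝ)
            * (((d : ℝ) + 1) ^ (2 * d) * (d.factorial : ℝ) * (C₀' * E * deriv f j) * A') := by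
    intro k hk
    have hknn : (0:ℝ) ≤ ((d + 1).choose k : ℝ) := by positivity
    have hRHSnn : 0 ≤ ((d : ℝ) + 1) ^ (2 * d) * (d.factorial : ℝ)
        * (C₀' * E * deriv f j) * A' := by
      have := hdnn j hj1R
      positivity
    rcases Nat.lt_or_ge k (d + 1) with hkd | hkd
    · have hkd' : k ≤ d := by omega
      have hueq : Dop k (useq n d) j = ((n - (j + k) + d).choose (d - k) : ℝ) := by
        rw [Dop_congr k (useq n d) (fun y => ((n - y + d).choose d : ℝ)) j
          (fun y hy1 hy2 => Acoef_eq n y d (by omega))]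
        exact Dop_choose n d k hkd' j (by omega)
      rw [hueq, abs_mul, abs_mul,
        abs_of_nonneg hknn,
        abs_of_nonneg (by positivity : (0:ℝ) ≤ ((n - (j + k) + d).choose (d - k) : ℝ))]
      have hM := hFd k hkd'
      have hcp := chooseprod d n j k hkd' hj1 (by omega)
      have hpowpos : (0:ℝ) < (j : ℝ) ^ (d - k) := by positivity
      calc ((d + 1).choose k : ℝ) * ((n - (j + k) + d).choose (d - k) : ℝ)
            * |Dop (d + 1 - k) (Fseq f) (j + k)| * ((j + d).choose d : ℝ)
          ≤ ((d + 1).choose k : ℝ) * ((n - (j + k) + d).choose (d - k) : ℝ)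
            * (C₀' * E * deriv f j / (j : ℝ) ^ (d - k)) * ((j + d).choose d : ℝ) := by
            apply mul_le_mul_of_nonneg_right _ (by positivity)
            apply mul_le_mul_of_nonneg_left hM (by positivity)
        _ = ((d + 1).choose k : ℝ)
            * (((n - (j + k) + d).choose (d - k) : ℝ) * ((j + d).choose d : ℝ))
            * (C₀' * E * deriv f j / (j : ℝ) ^ (d - k)) := by ring
        _ ≤ ((d + 1).choose k : ℝ)
            * (((d : ℝ) + 1) ^ (2 * d) * (d.factorial : ℝ) * (j : ℝ) ^ (d - k) * A')
            * (C₀' * E * deriv f j / (j : ℝ) ^ (d - k)) := by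
            apply mul_le_mul_of_nonneg_right
              (mul_le_mul_of_nonneg_left hcp hknn)
            have := hdnn j hj1R
            positivity
        _ = ((d + 1).choose k : ℝ)
            * (((d : ℝ) + 1) ^ (2 * d) * (d.factorial : ℝ) * (C₀' * E * deriv f j) * A') := by
            field_simp
    · -- k = d + 1
      have hkeq : k = d + 1 := by have := Finset.mem_range.mp hk; omega
      have hueq : Dop k (useq n d) j = 0 := by
        rw [hkeq]
        rw [Dop_congr (d+1) (useq n d) (fun y => ((n - y + d).choose d : ℝ)) j
          (fun y hy1 hy2 => Acoef_eq n y d (by omega))]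
        exact Dop_choose_top n d j (by omega)
      rw [hueq]
      simp only [mul_zero, zero_mul, abs_zero]
      exact mul_nonneg hknn hRHSnn
  -- sum up
  have hsumchoose : (∑ k ∈ range (d + 2), ((d + 1).choose k : ℝ)) = 2 ^ (d + 1) := by
    have := Nat.sum_range_choose (d + 1)
    calc (∑ k ∈ range (d + 2), ((d+1).choose k : ℝ))
        = ((∑ k ∈ range (d + 2), (d+1).choose k : ℕ) : ℝ) := by push_cast; ring
      _ = ((2 ^ (d+1) : ℕ) : ℝ) := by exact_mod_cast congrArg Nat.cast this
      _ = 2 ^ (d + 1) := by push_cast; ring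
  calc |Dop (d + 1) (wseq f n d) j| * ((j + d).choose j : ℝ)
      ≤ (∑ k ∈ range (d + 2), |((d + 1).choose k : ℝ) * Dop k (useq n d) j
          * Dop (d + 1 - k) (Fseq f) (j + k)|) * ((j + d).choose d : ℝ) := by
        rw [hAj, hw]
        apply mul_le_mul_of_nonneg_right (Finset.abs_sum_le_sum_abs _ _) (by positivity)
    _ = ∑ k ∈ range (d + 2), |((d + 1).choose k : ℝ) * Dop k (useq n d) j
          * Dop (d + 1 - k) (Fseq f) (j + k)| * ((j + d).choose d : ℝ) := by
        rw [Finset.sum_mul]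
    _ ≤ ∑ k ∈ range (d + 2), ((d + 1).choose k : ℝ)
          * (((d : ℝ) + 1) ^ (2 * d) * (d.factorial : ℝ) * (C₀' * E * deriv f j) * A') :=
        Finset.sum_le_sum hterm
    _ = (∑ k ∈ range (d + 2), ((d + 1).choose k : ℝ))
          * (((d : ℝ) + 1) ^ (2 * d) * (d.factorial : ℝ) * (C₀' * E * deriv f j) * A') := by
        rw [← Finset.sum_mul]
    _ = 2 ^ (d + 1) * ((d : ℝ) + 1) ^ (2 * d) * (d.factorial : ℝ) * C₀' * E * deriv f j * A' := by
        rw [hsumchoose]; ring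

/-- Let `f` be an increasing, `(d+1)`-times differentiable doubling
weight on `[1,∞)` with `|f^{(m)}(t)| ≤ C₀ f'(t)/t^{m-1}` for `1 ≤ m ≤ d+1`, extended by
`f(1)` below `1`. Then `∑_{j=0}^n |Δ^{d+1}(A_{n-j}^d f(j))| A_j^d ≤ C f(n) A_n^d`
with `C = C(d, D, C₀)`. -/
theorem difference_sum_bound (d : ℕ) (hd : 1 ≤ d) (D C₀ : ℝ) :
    ∃ C : ℝ, ∀ f : ℝ → ℝ,
      (∀ t : ℝ, 1 ≤ t → 0 < f t) →
      (∀ x y : ℝ, 1 ≤ x → x ≤ y → f x ≤ f y) →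
      (∀ x : ℝ, 1 ≤ x → f (2 * x) ≤ D * f x) →
      (∀ m : ℕ, m ≤ d → ∀ t : ℝ, 1 ≤ t → DifferentiableAt ℝ (iteratedDeriv m f) t) →
      (∀ m : ℕ, 1 ≤ m → m ≤ d + 1 → ∀ t : ℝ, 1 ≤ t →
        |iteratedDeriv m f t| ≤ C₀ * deriv f t / t ^ (m - 1)) →
      ∀ n : ℕ, 1 ≤ n →
        ∑ j ∈ Finset.range (n + 1),
            |∑ i ∈ Finset.range (d + 2), (-1 : ℝ) ^ i * (Nat.choose (d + 1) i : ℝ) *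
                (Acoef ((n : ℤ) - ((j + i : ℕ) : ℤ)) d * f (max ((j + i : ℕ) : ℝ) 1))| *
              (Nat.choose (j + d) j : ℝ)
          ≤ C * f (n : ℝ) * (Nat.choose (n + d) n : ℝ) := by
  set D' : ℝ := max D 1 with hD'def
  set C₀' : ℝ := max C₀ 0 with hC₀'def
  have hD'1 : (1:ℝ) ≤ D' := le_max_right _ _
  have hD'0 : (0:ℝ) ≤ D' := by linarith
  have hC₀'0 : (0:ℝ) ≤ C₀' := le_max_right _ _
  set E : ℝ := Real.exp (C₀' * ((d:ℝ) + 2)) with hEdef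
  have hE0 : (0:ℝ) < E := Real.exp_pos _
  set K2 : ℝ := 2 ^ (d+1) * ((d:ℝ)+1)^(2*d) * (d.factorial : ℝ) * C₀' * E * E with hK2def
  set K3 : ℝ := 2 ^ (d+1) * (((2*d+1).choose d : ℕ) : ℝ) * D'^(d+2) with hK3def
  have hK2nn : 0 ≤ K2 := by rw [hK2def]; positivity
  have hK3nn : 0 ≤ K3 := by rw [hK3def]; positivity
  refine ⟨K2 * D' + ((d:ℝ) + 3) * K3, ?_⟩
  intro f hfpos hfmono hfdoub hfdiff hfder n hn
  have hnR : (1:ℝ) ≤ (n:ℝ) := by exact_mod_cast hn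
  have hfpos' : ∀ t : ℝ, 1 ≤ t → 0 ≤ f t := fun t ht => (hfpos t ht).le
  have hfn0 : 0 ≤ f n := hfpos' n hnR
  have hdiff0 : ∀ t : ℝ, 1 ≤ t → DifferentiableAt ℝ f t := by
    intro t ht; have h := hfdiff 0 (by omega) t ht; rwa [iteratedDeriv_zero] at h
  have hdnn : ∀ t : ℝ, 1 ≤ t → 0 ≤ deriv f t := fun t ht =>
    deriv_nonneg_of_mono f t ht (hdiff0 t ht) hfmono
  have hFam : ∀ m : ℕ, m ≤ d → ∀ t : ℝ, 1 ≤ t →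
      HasDerivAt (iteratedDeriv m f) (iteratedDeriv (m + 1) f t) t := by
    intro m hm t ht
    have h := (hfdiff m hm t ht).hasDerivAt
    rwa [← iteratedDeriv_succ] at h
  have hder' : ∀ m : ℕ, 1 ≤ m → m ≤ d + 1 → ∀ t : ℝ, 1 ≤ t →
      |iteratedDeriv m f t| ≤ C₀' * deriv f t / t ^ (m - 1) := by
    intro m h1 h2 t ht
    refine le_trans (hfder m h1 h2 t ht) ?_
    have h3 := hdnn t ht
    have ht0 : (0:ℝ) < t := lt_of_lt_of_le zero_lt_one ht
    have ht1 : (0:ℝ) < t ^ (m - 1) := pow_pos ht0 _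
    rw [div_le_div_iff₀ ht1 ht1]
    have : C₀ * deriv f t ≤ C₀' * deriv f t :=
      mul_le_mul_of_nonneg_right (le_max_left _ _) h3
    nlinarith [ht1]
  have hφ : ∀ t : ℝ, 1 ≤ t → HasDerivAt (deriv f) (iteratedDeriv 2 f t) t := by
    intro t ht
    have h := hFam 1 hd t ht
    rwa [iteratedDeriv_one] at h
  have hφb : ∀ t : ℝ, 1 ≤ t → |iteratedDeriv 2 f t| ≤ C₀' * deriv f t := by
    intro t ht
    refine le_trans (hder' 2 (by omega) (by omega) t ht) ?_
    rw [show (2 - 1 : ℕ) = 1 by rfl, pow_one]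
    exact div_le_self (mul_nonneg hC₀'0 (hdnn t ht)) ht
  have gup := fun a b => gronwall_up (deriv f) (iteratedDeriv 2 f) C₀' hφ hdnn hφb a b
  have gdown := fun a b => gronwall_down (deriv f) (iteratedDeriv 2 f) C₀' hφ hdnn hφb a b
  have hdoub' : ∀ x : ℝ, 1 ≤ x → f (2 * x) ≤ D' * f x := fun x hx =>
    le_trans (hfdoub x hx) (mul_le_mul_of_nonneg_right (le_max_left _ _) (hfpos' x hx))
  have hdoubK : ∀ K : ℕ, ∀ x : ℝ, 1 ≤ x → f (2 ^ K * x) ≤ D' ^ K * f x := by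
    intro K
    induction K with
    | zero => intro x hx; norm_num
    | succ K ih =>
      intro x hx
      have h2x : (1:ℝ) ≤ 2 * x := by linarith
      have e : (2:ℝ) ^ (K+1) * x = 2 ^ K * (2 * x) := by ring
      rw [e]
      calc f (2 ^ K * (2 * x)) ≤ D' ^ K * f (2 * x) := ih (2 * x) h2x
        _ ≤ D' ^ K * (D' * f x) :=
            mul_le_mul_of_nonneg_left (hdoub' x hx) (by positivity)
        _ = D' ^ (K+1) * f x := by ring
  have hfnd : Fseq f (n + d + 1) ≤ D' ^ (d + 2) * f n := by
    rw [Fseq_eq f (by omega)]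
    have h2 : (d + 3 : ℕ) ≤ 2 ^ (d + 2) := by
      have := Nat.lt_two_pow_self (n := d + 2); omega
    have h2R : ((d:ℝ) + 3) ≤ 2 ^ (d + 2) := by exact_mod_cast h2
    have h1 : ((n + d + 1 : ℕ) : ℝ) ≤ 2 ^ (d + 2) * (n : ℝ) := by
      push_cast
      nlinarith [hnR]
    calc f ((n + d + 1 : ℕ) : ℝ) ≤ f (2 ^ (d + 2) * (n : ℝ)) :=
          hfmono _ _ (by exact_mod_cast (by omega : 1 ≤ n + d + 1)) h1
      _ ≤ D' ^ (d + 2) * f n := hdoubK (d + 2) n hnR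
  have hMVT : ∀ j : ℕ, 1 ≤ j → deriv f (j:ℝ) ≤ E * (Fseq f (j+1) - Fseq f j) := by
    intro j hj
    have hjR : (1:ℝ) ≤ (j:ℝ) := by exact_mod_cast hj
    have hlt : (j:ℝ) < (j:ℝ) + 1 := by linarith
    obtain ⟨c, hc, hceq⟩ := exists_hasDerivAt_eq_slope f (deriv f) hlt
      (fun s hs => ((hdiff0 s (le_trans hjR hs.1)).hasDerivAt).continuousAt.continuousWithinAt)
      (fun s hs => (hdiff0 s (le_trans hjR hs.1.le)).hasDerivAt)
    have hone : (j:ℝ) + 1 - j = 1 := by ring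
    rw [hone, div_one] at hceq
    have h2 : deriv f j ≤ deriv f c * Real.exp (C₀' * (c - j)) := gdown j c hjR hc.1.le
    have h3 : Real.exp (C₀' * (c - j)) ≤ E := by
      rw [hEdef]; apply Real.exp_le_exp.mpr; nlinarith [hc.1, hc.2, hC₀'0,
        (by positivity : (0:ℝ) ≤ (d:ℝ))]
    have h4 : 0 ≤ deriv f c := hdnn c (by linarith [hc.1])
    have hFj1 : Fseq f (j+1) = f ((j:ℝ)+1) := by
      rw [Fseq_eq f (by omega)]; norm_num
    have hFj : Fseq f j = f (j:ℝ) := Fseq_eq f hj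
    calc deriv f (j:ℝ) ≤ deriv f c * Real.exp (C₀' * (c - j)) := h2
      _ ≤ deriv f c * E := mul_le_mul_of_nonneg_left h3 h4
      _ = E * deriv f c := by ring
      _ = E * (Fseq f (j+1) - Fseq f j) := by rw [hceq, hFj1, hFj]
  -- the pointwise bound
  have hA : ((n + d).choose n : ℝ) = ((n + d).choose d : ℝ) := by
    exact_mod_cast congrArg Nat.cast (Nat.choose_symm_add (a := n) (b := d))
  have hA'nn : (0:ℝ) ≤ ((n + d).choose d : ℝ) := by positivity
  have hmain : ∀ j ∈ Finset.range (n+1),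
      |∑ i ∈ Finset.range (d + 2), (-1 : ℝ) ^ i * (Nat.choose (d + 1) i : ℝ) *
          (Acoef ((n : ℤ) - ((j + i : ℕ) : ℤ)) d * f (max ((j + i : ℕ) : ℝ) 1))| *
        ((j + d).choose j : ℝ)
      ≤ K2 * (Fseq f (j+1) - Fseq f j) * ((n+d).choose d : ℝ)
        + (if 1 ≤ j ∧ j + d + 2 ≤ n then 0 else K3 * f n * ((n+d).choose d : ℝ)) := by
    intro j hjmem
    have hjn : j ≤ n := by have := Finset.mem_range.mp hjmem; omega
    have hid : (∑ i ∈ Finset.range (d + 2), (-1 : ℝ) ^ i * (Nat.choose (d + 1) i : ℝ) *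
          (Acoef ((n : ℤ) - ((j + i : ℕ) : ℤ)) d * f (max ((j + i : ℕ) : ℝ) 1)))
        = Dop (d+1) (wseq f n d) j := rfl
    rw [hid]
    have hPnn : 0 ≤ K2 * (Fseq f (j+1) - Fseq f j) * ((n+d).choose d : ℝ) := by
      have hmono := Fseq_mono f hfmono (Nat.le_succ j)
      apply mul_nonneg (mul_nonneg hK2nn (by linarith)) hA'nn
    by_cases hgood : 1 ≤ j ∧ j + d + 2 ≤ n
    · rw [if_pos hgood, add_zero]
      have hgb := good_bound f d n j C₀' hC₀'0 hdnn hFam hder' gup hgood.1 hgood.2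
      refine le_trans hgb ?_
      have hXnn : (0:ℝ) ≤ 2 ^ (d + 1) * ((d : ℝ) + 1) ^ (2 * d) * (d.factorial : ℝ) * C₀' * E := by
        positivity
      calc 2 ^ (d + 1) * ((d : ℝ) + 1) ^ (2 * d) * (d.factorial : ℝ) * C₀'
            * E * deriv f j * ((n + d).choose d : ℝ)
          ≤ 2 ^ (d + 1) * ((d : ℝ) + 1) ^ (2 * d) * (d.factorial : ℝ) * C₀'
            * E * (E * (Fseq f (j+1) - Fseq f j)) * ((n + d).choose d : ℝ) := by
            apply mul_le_mul_of_nonneg_right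
              (mul_le_mul_of_nonneg_left (hMVT j hgood.1) hXnn) hA'nn
        _ = K2 * (Fseq f (j+1) - Fseq f j) * ((n+d).choose d : ℝ) := by
            rw [hK2def]; ring
    · rw [if_neg hgood]
      have hb := bad_bound f n d j hfpos' hjn hfmono
      have hcase : j = 0 ∨ n < j + d + 2 := by omega
      have hFnn : (0:ℝ) ≤ Fseq f (n + d + 1) := hfpos' _ (le_max_right _ _)
      have hprod : useq n d j * ((j+d).choose j : ℝ)
          ≤ (((2*d+1).choose d : ℕ):ℝ) * ((n+d).choose d : ℝ) := by
        have hcj : ((j + d).choose j : ℝ) = ((j + d).choose d : ℝ) := by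
          exact_mod_cast congrArg Nat.cast (Nat.choose_symm_add (a := j) (b := d))
        rw [useq, Acoef_eq n j d hjn, hcj]
        rcases hcase with h0 | hbig
        · subst h0
          simp only [Nat.sub_zero, Nat.zero_add, zero_add, Nat.choose_self, Nat.cast_one,
            mul_one]
          have h1 : (1:ℝ) ≤ (((2*d+1).choose d : ℕ):ℝ) := by
            exact_mod_cast Nat.succ_le_of_lt (Nat.choose_pos (by omega : d ≤ 2*d+1))
          exact le_mul_of_one_le_left hA'nn h1
        · have h1 : (n - j + d).choose d ≤ (2*d+1).choose d :=
            Nat.choose_le_choose d (by omega)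
          have h2 : (j + d).choose d ≤ (n + d).choose d :=
            Nat.choose_le_choose d (by omega)
          apply mul_le_mul (by exact_mod_cast h1) (by exact_mod_cast h2)
            (by positivity) (by positivity)
      calc |Dop (d + 1) (wseq f n d) j| * ((j + d).choose j : ℝ)
          ≤ (2 ^ (d + 1) * (useq n d j * Fseq f (n + d + 1))) * ((j + d).choose j : ℝ) := by
            apply mul_le_mul_of_nonneg_right hb (by positivity)
        _ = 2 ^ (d + 1) * Fseq f (n + d + 1) * (useq n d j * ((j + d).choose j : ℝ)) := by
            ring
        _ ≤ 2 ^ (d + 1) * (D' ^ (d + 2) * f n)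
              * ((((2*d+1).choose d : ℕ):ℝ) * ((n+d).choose d : ℝ)) := by
            apply mul_le_mul (mul_le_mul_of_nonneg_left hfnd (by positivity)) hprod
              (mul_nonneg (Acoef_nonneg _ _) (by positivity))
              (by positivity)
        _ = K3 * f n * ((n+d).choose d : ℝ) := by rw [hK3def]; ring
        _ ≤ K2 * (Fseq f (j+1) - Fseq f j) * ((n+d).choose d : ℝ)
              + K3 * f n * ((n+d).choose d : ℝ) := le_add_of_nonneg_left hPnn
  -- summation
  rw [hA]
  refine le_trans (Finset.sum_le_sum hmain) ?_
  rw [Finset.sum_add_distrib]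
  have hP : ∑ j ∈ Finset.range (n+1), K2 * (Fseq f (j+1) - Fseq f j) * ((n+d).choose d : ℝ)
      ≤ K2 * D' * f n * ((n+d).choose d : ℝ) := by
    have e : ∀ j ∈ Finset.range (n+1), K2 * (Fseq f (j+1) - Fseq f j) * ((n+d).choose d : ℝ)
        = (K2 * ((n+d).choose d : ℝ)) * (Fseq f (j+1) - Fseq f j) := fun j _ => by ring
    rw [Finset.sum_congr rfl e, ← Finset.mul_sum, Finset.sum_range_sub (Fseq f) (n+1)]
    have h5 : Fseq f (n+1) - Fseq f 0 ≤ D' * f n := by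
      have hF0 : 0 ≤ Fseq f 0 := hfpos' _ (le_max_right _ _)
      have h6 : Fseq f (n+1) ≤ D' * f n := by
        rw [Fseq_eq f (by omega)]
        calc f ((n+1:ℕ):ℝ) ≤ f (2 * n) :=
              hfmono _ _ (by exact_mod_cast (by omega : 1 ≤ n+1)) (by push_cast; linarith)
          _ ≤ D' * f n := hdoub' n hnR
      linarith
    calc K2 * ((n+d).choose d : ℝ) * (Fseq f (n+1) - Fseq f 0)
        ≤ K2 * ((n+d).choose d : ℝ) * (D' * f n) :=
          mul_le_mul_of_nonneg_left h5 (by positivity)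
      _ = K2 * D' * f n * ((n+d).choose d : ℝ) := by ring
  have hQ : ∑ j ∈ Finset.range (n+1),
        (if 1 ≤ j ∧ j + d + 2 ≤ n then 0 else K3 * f n * ((n+d).choose d : ℝ))
      ≤ ((d:ℝ)+3) * (K3 * f n * ((n+d).choose d : ℝ)) := by
    have hcnn : 0 ≤ K3 * f n * ((n+d).choose d : ℝ) :=
      mul_nonneg (mul_nonneg hK3nn hfn0) hA'nn
    set S := (Finset.range (n+1)).filter (fun j => ¬(1 ≤ j ∧ j + d + 2 ≤ n)) with hSdef
    have hsum : ∑ j ∈ Finset.range (n+1),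
          (if 1 ≤ j ∧ j + d + 2 ≤ n then 0 else K3 * f n * ((n+d).choose d : ℝ))
        = ∑ _j ∈ S, (K3 * f n * ((n+d).choose d : ℝ)) := by
      rw [hSdef, Finset.sum_filter]
      apply Finset.sum_congr rfl
      intro j _
      by_cases h : 1 ≤ j ∧ j + d + 2 ≤ n <;> simp [h]
    rw [hsum, Finset.sum_const, nsmul_eq_mul]
    have hcard : S.card ≤ d + 3 := by
      have hsub : S ⊆ insert 0 (Finset.Icc (n - (d+1)) n) := by
        intro x hx
        rw [hSdef, Finset.mem_filter, Finset.mem_range] at hx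
        rw [Finset.mem_insert, Finset.mem_Icc]
        omega
      refine le_trans (Finset.card_le_card hsub) ?_
      refine le_trans (Finset.card_insert_le _ _) ?_
      rw [Nat.card_Icc]
      omega
    apply mul_le_mul_of_nonneg_right _ hcnn
    calc (S.card : ℝ) ≤ ((d + 3 : ℕ) : ℝ) := by exact_mod_cast hcard
      _ = (d:ℝ) + 3 := by push_cast; ring
  refine le_trans (add_le_add hP hQ) (le_of_eq ?_)
  ring
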